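/- Let k ≥ 1, H a complex Hilbert space, and A a k×k quantum magic square on H that cannot be positively perturbed. Define the (k+1)×(k+1) matrix A' over the bounded operators on H by A'_{i,j} = A_{i,j} for i,j ≤ k, A'_{k+1,k+1} = I_H, and A'_{i,j} = 0 in all other cases. Then A' is a (k+1)×(k+1) quantum magic square on H that cannot be positively perturbed. -/

import Mathlib

noncomputable section

instance piLpCompleteSpace {ι : Type} (p : ENNReal) (β : ι → Type)
    [∀ i, UniformSpace (β i)] [∀ i, CompleteSpace (β i)] :
    CompleteSpace (PiLp p β) :=
  inferInstance

structure HilbertC where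
  carrier : Type
  [normed : NormedAddCommGroup carrier]
  [ips : InnerProductSpace ℂ carrier]
  [complete : CompleteSpace carrier]

attribute [instance] HilbertC.normed HilbertC.ips HilbertC.complete

/-- The block operator on the Hilbert-space direct sum `⊕_{i ∈ ι} H` (realised as
`PiLp 2 (fun _ : ι => H)`) associated with a matrix `T` of bounded operators on `H`. -/
def blockOp {ι : Type} [Fintype ι] [DecidableEq ι]
    {H : Type} [NormedAddCommGroup H] [InnerProductSpace ℂ H] [CompleteSpace H]
    (T : ι → ι → H →L[ℂ] H) :
    PiLp 2 (fun _ : ι => H) →L[ℂ] PiLp 2 (fun _ : ι => H) :=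
  ((PiLp.continuousLinearEquiv 2 ℂ (fun _ : ι => H)).symm.toContinuousLinearMap).comp
    ((ContinuousLinearMap.pi
        (fun p => ∑ q, (T p q).comp (ContinuousLinearMap.proj q))).comp
      (PiLp.continuousLinearEquiv 2 ℂ (fun _ : ι => H)).toContinuousLinearMap)

/-- An `n × n` quantum magic square on the Hilbert space `H`. -/
def IsQMS {n : ℕ} {H : Type} [NormedAddCommGroup H] [InnerProductSpace ℂ H] [CompleteSpace H]
    (A : Fin n → Fin n → H →L[ℂ] H) : Prop :=
  (∀ i j, (A i j).IsPositive) ∧ (∀ i, ∑ k, A i k = 1) ∧ (∀ j, ∑ k, A k j = 1)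

/-- The blocks of the operator `φ(A)`: the `((i,j),(k,l))` block is
`δ_{(i,j),(k,l)} A_{i,j} − A_{i,j} A_{k,l}`. -/
def phiBlocks {n : ℕ} {H : Type} [NormedAddCommGroup H] [InnerProductSpace ℂ H] [CompleteSpace H]
    (A : Fin n → Fin n → H →L[ℂ] H) :
    (Fin n × Fin n) → (Fin n × Fin n) → H →L[ℂ] H :=
  fun p q => (if p = q then A p.1 p.2 else 0) - A p.1 p.2 * A q.1 q.2

/-- `A` can be positively perturbed: there is a self-adjoint block operator `X` whose
`((i,j),(k,l))` block vanishes whenever `i = k` or `j = l`, with `φ(A) + X ≥ 0`. -/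
def CanPerturb {n : ℕ} {H : Type} [NormedAddCommGroup H] [InnerProductSpace ℂ H] [CompleteSpace H]
    (A : Fin n → Fin n → H →L[ℂ] H) : Prop :=
  ∃ X : (Fin n × Fin n) → (Fin n × Fin n) → H →L[ℂ] H,
    IsSelfAdjoint (blockOp X) ∧
    (∀ p q : Fin n × Fin n, p.1 = q.1 ∨ p.2 = q.2 → X p q = 0) ∧
    (blockOp (phiBlocks A) + blockOp X).IsPositive

/-- `A` dilates to a quantum permutation matrix. -/
def DilatesToQPM {n : ℕ} {H : Type} [NormedAddCommGroup H] [InnerProductSpace ℂ H]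
    [CompleteSpace H] (A : Fin n → Fin n → H →L[ℂ] H) : Prop :=
  ∃ (K : HilbertC) (Vi : H →L[ℂ] K.carrier) (P : Fin n → Fin n → K.carrier →L[ℂ] K.carrier),
    Isometry Vi ∧
    (∀ i j, IsSelfAdjoint (P i j) ∧ IsIdempotentElem (P i j)) ∧
    (∀ i, ∑ k, P i k = 1) ∧ (∀ j, ∑ k, P k j = 1) ∧
    ∀ i j, A i j = (ContinuousLinearMap.adjoint Vi).comp ((P i j).comp Vi)


section MyAux
variable {H : Type} [NormedAddCommGroup H] [InnerProductSpace ℂ H] [CompleteSpace H]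

set_option linter.unusedSectionVars false in
lemma my_blockOp_apply {ι : Type} [Fintype ι] [DecidableEq ι]
    (T : ι → ι → H →L[ℂ] H) (x : PiLp 2 (fun _ : ι => H)) (p : ι) :
    blockOp T x p = ∑ q, T p q (x q) := by
  simp [blockOp, ContinuousLinearMap.sum_apply]

set_option linter.unusedSectionVars false in
lemma my_inner_blockOp {ι : Type} [Fintype ι] [DecidableEq ι]
    (T : ι → ι → H →L[ℂ] H) (x y : PiLp 2 (fun _ : ι => H)) :
    (inner ℂ (blockOp T x) y : ℂ) = ∑ p, ∑ q, (inner ℂ (T p q (x q)) (y p) : ℂ) := by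
  rw [PiLp.inner_apply]
  exact Finset.sum_congr rfl fun p _ => by rw [my_blockOp_apply, sum_inner]

def myExt {k : ℕ} (x : PiLp 2 (fun _ : Fin k × Fin k => H)) :
    PiLp 2 (fun _ : Fin (k+1) × Fin (k+1) => H) :=
  WithLp.toLp 2 (fun P : Fin (k+1) × Fin (k+1) => if h : P.1 ≠ Fin.last k ∧ P.2 ≠ Fin.last k
    then x (P.1.castPred h.1, P.2.castPred h.2) else 0)

set_option linter.unusedSectionVars false in
lemma myExt_castSucc {k : ℕ} (x : PiLp 2 (fun _ : Fin k × Fin k => H)) (i j : Fin k) :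
    myExt x (i.castSucc, j.castSucc) = x (i, j) := by
  simp [myExt, (Fin.castSucc_lt_last i).ne, (Fin.castSucc_lt_last j).ne]

set_option linter.unusedSectionVars false in
lemma myExt_last_left {k : ℕ} (x : PiLp 2 (fun _ : Fin k × Fin k => H)) (j : Fin (k+1)) :
    myExt x (Fin.last k, j) = 0 := by simp [myExt]

set_option linter.unusedSectionVars false in
lemma myExt_last_right {k : ℕ} (x : PiLp 2 (fun _ : Fin k × Fin k => H)) (i : Fin (k+1)) :
    myExt x (i, Fin.last k) = 0 := by simp [myExt]

set_option linter.unusedSectionVars false in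
lemma my_inner_transfer {k : ℕ}
    (T' : (Fin (k+1) × Fin (k+1)) → (Fin (k+1) × Fin (k+1)) → H →L[ℂ] H)
    (x y : PiLp 2 (fun _ : Fin k × Fin k => H)) :
    (inner ℂ (blockOp (fun p q : Fin k × Fin k =>
        T' (p.1.castSucc, p.2.castSucc) (q.1.castSucc, q.2.castSucc)) x) y : ℂ)
      = inner ℂ (blockOp T' (myExt x)) (myExt y) := by
  rw [my_inner_blockOp, my_inner_blockOp]
  simp only [Fintype.sum_prod_type, Fin.sum_univ_castSucc, myExt_castSucc, myExt_last_left,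
    myExt_last_right, map_zero, inner_zero_left, inner_zero_right, Finset.sum_const_zero,
    add_zero, zero_add]

set_option linter.unusedSectionVars false in
/-- transfer of symmetry from a block operator on the big space to its compression. -/
lemma my_symm_transfer {k : ℕ}
    (T' : (Fin (k+1) × Fin (k+1)) → (Fin (k+1) × Fin (k+1)) → H →L[ℂ] H)
    (hT' : ∀ u v, (inner ℂ (blockOp T' u) v : ℂ) = inner ℂ u (blockOp T' v))
    (x y : PiLp 2 (fun _ : Fin k × Fin k => H)) :
    (inner ℂ (blockOp (fun p q : Fin k × Fin k =>
        T' (p.1.castSucc, p.2.castSucc) (q.1.castSucc, q.2.castSucc)) x) y : ℂ)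
      = inner ℂ x (blockOp (fun p q : Fin k × Fin k =>
        T' (p.1.castSucc, p.2.castSucc) (q.1.castSucc, q.2.castSucc)) y) := by
  calc (inner ℂ (blockOp (fun p q : Fin k × Fin k =>
        T' (p.1.castSucc, p.2.castSucc) (q.1.castSucc, q.2.castSucc)) x) y : ℂ)
      = inner ℂ (blockOp T' (myExt x)) (myExt y) := my_inner_transfer T' x y
    _ = inner ℂ (myExt x) (blockOp T' (myExt y)) := hT' _ _
    _ = starRingEnd ℂ (inner ℂ (blockOp T' (myExt y)) (myExt x)) := (inner_conj_symm _ _).symm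
    _ = starRingEnd ℂ (inner ℂ (blockOp (fun p q : Fin k × Fin k =>
        T' (p.1.castSucc, p.2.castSucc) (q.1.castSucc, q.2.castSucc)) y) x) := by
          rw [my_inner_transfer]
    _ = _ := inner_conj_symm _ _

end MyAux

theorem stmt5 (k : ℕ) (hk : 1 ≤ k)
    (H : Type) [NormedAddCommGroup H] [InnerProductSpace ℂ H] [CompleteSpace H]
    (A : Fin k → Fin k → H →L[ℂ] H) (hA : IsQMS A) (hnp : ¬ CanPerturb A)
    (A' : Fin (k + 1) → Fin (k + 1) → H →L[ℂ] H)
    (hA' : ∀ i j : Fin (k + 1), A' i j =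
      if hi : (i : ℕ) < k then
        (if hj : (j : ℕ) < k then A ⟨i, hi⟩ ⟨j, hj⟩ else 0)
      else
        (if (j : ℕ) < k then 0 else 1)) :
    IsQMS A' ∧ ¬ CanPerturb A' := by
  classical
  have hAsucc : ∀ i j : Fin k, A' i.castSucc j.castSucc = A i j := by
    intro i j
    rw [hA']
    simp [i.isLt, j.isLt]
  have hAlastlast : A' (Fin.last k) (Fin.last k) = 1 := by
    rw [hA']; simp
  have hAlastL : ∀ j : Fin k, A' (Fin.last k) j.castSucc = 0 := by
    intro j; rw [hA']; simp [j.isLt]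
  have hAlastR : ∀ i : Fin k, A' i.castSucc (Fin.last k) = 0 := by
    intro i; rw [hA']; simp [i.isLt]
  have hQMS : IsQMS A' := by
    refine ⟨?_, ?_, ?_⟩
    · intro i j
      rw [hA']
      split_ifs
      · exact hA.1 _ _
      · exact ContinuousLinearMap.isPositive_zero
      · exact ContinuousLinearMap.isPositive_zero
      · exact ContinuousLinearMap.isPositive_one
    · intro i
      refine Fin.lastCases ?_ ?_ i
      · rw [Fin.sum_univ_castSucc]
        simp [hAlastL, hAlastlast]
      · intro i0
        rw [Fin.sum_univ_castSucc]
        simp [hAsucc, hAlastR, hA.2.1 i0]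
    · intro j
      refine Fin.lastCases ?_ ?_ j
      · rw [Fin.sum_univ_castSucc]
        simp [hAlastR, hAlastlast]
      · intro j0
        rw [Fin.sum_univ_castSucc]
        simp [hAsucc, hAlastL, hA.2.2 j0]
  refine ⟨hQMS, fun hcp => hnp ?_⟩
  obtain ⟨X', hsa', hzero', hpos'⟩ := hcp
  set X : (Fin k × Fin k) → (Fin k × Fin k) → H →L[ℂ] H :=
    fun p q => X' (p.1.castSucc, p.2.castSucc) (q.1.castSucc, q.2.castSucc) with hX
  have hphi : phiBlocks A = fun p q : Fin k × Fin k =>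
      phiBlocks A' (p.1.castSucc, p.2.castSucc) (q.1.castSucc, q.2.castSucc) := by
    funext p q
    by_cases h : p = q
    · subst h; simp [phiBlocks, hAsucc]
    · have h' : ¬ ((p.1.castSucc, p.2.castSucc) : Fin (k+1) × Fin (k+1))
          = (q.1.castSucc, q.2.castSucc) := by
        simp only [Prod.mk.injEq, Fin.castSucc_inj, ne_eq]
        intro hc
        exact h (Prod.ext hc.1 hc.2)
      simp [phiBlocks, hAsucc, h, h']
  have hXsymm : ∀ u v, (inner ℂ (blockOp X' u) v : ℂ) = inner ℂ u (blockOp X' v) :=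
    fun u v => hsa'.isSymmetric u v
  have hsum : ∀ x y : PiLp 2 (fun _ : Fin k × Fin k => H),
      (inner ℂ ((blockOp (phiBlocks A) + blockOp X) x) y : ℂ)
        = inner ℂ ((blockOp (phiBlocks A') + blockOp X') (myExt x)) (myExt y) := by
    intro x y
    rw [ContinuousLinearMap.add_apply, ContinuousLinearMap.add_apply,
      inner_add_left, inner_add_left]
    congr 1
    · rw [hphi]
      exact my_inner_transfer _ _ _
    · exact my_inner_transfer _ _ _
  have hSsym : ∀ u v, (inner ℂ ((blockOp (phiBlocks A') + blockOp X') u) v : ℂ)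
      = inner ℂ u ((blockOp (phiBlocks A') + blockOp X') v) :=
    fun u v => hpos'.1 u v
  refine ⟨X, ?_, ?_, ?_, ?_⟩
  · exact ContinuousLinearMap.isSelfAdjoint_iff_isSymmetric.2
      (fun x y => my_symm_transfer X' hXsymm x y)
  · intro p q hpq
    apply hzero'
    rcases hpq with h | h
    · exact Or.inl (by simp [h])
    · exact Or.inr (by simp [h])
  · intro x y
    calc (inner ℂ ((blockOp (phiBlocks A) + blockOp X) x) y : ℂ)
        = inner ℂ ((blockOp (phiBlocks A') + blockOp X') (myExt x)) (myExt y) := hsum x y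
      _ = inner ℂ (myExt x) ((blockOp (phiBlocks A') + blockOp X') (myExt y)) := hSsym _ _
      _ = starRingEnd ℂ (inner ℂ ((blockOp (phiBlocks A') + blockOp X') (myExt y)) (myExt x)) :=
          (inner_conj_symm _ _).symm
      _ = starRingEnd ℂ (inner ℂ ((blockOp (phiBlocks A) + blockOp X) y) x) := by rw [hsum]
      _ = _ := inner_conj_symm _ _
  · intro x
    have h0 := hpos'.2 (myExt x)
    unfold ContinuousLinearMap.reApplyInnerSelf at h0 ⊢
    rw [hsum]
    exact h0
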